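/- Let s, t ∈ ℕ and let f, g : ℝ → ℂ be smooth with f ∈ 𝓔_s^1 and g ∈ 𝓔_t^1; that is, there is C_f ≥ 1 such that for all m = 0,…,s and all n ∈ ℕ there is an integrable w : ℝ → ℂ with (d/dx)^n [f(x)·(x−i)^m] = ∫_ℝ w(τ)·e^{ixτ} dτ for all x and ∫|w| ≤ C_f^{n+1}·n!, and similarly for g with s replaced by t and constant C_g. Then f·g ∈ 𝓔_{s+t}^1: there exists C ≥ 1 such that for all m = 0,…,s+t and all n ∈ ℕ there is an integrable w with (d/dx)^n [f(x)·g(x)·(x−i)^m] = ∫_ℝ w(τ)·e^{ixτ} dτ for all x and ∫|w| ≤ C^{n+1}·n!. -/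

import Mathlib

open MeasureTheory Finset Convolution ContinuousLinearMap

-- norm of unit exponential
lemma norm_exp_I_mul (x τ : ℝ) : ‖Complex.exp (Complex.I * x * τ)‖ = 1 := by
  rw [Complex.norm_exp]
  simp [Complex.mul_re]

lemma cont_exp (x : ℝ) : Continuous (fun τ : ℝ => Complex.exp (Complex.I * x * τ)) :=
  Complex.continuous_exp.comp (continuous_const.mul Complex.continuous_ofReal)

lemma integrable_mul_exp {w : ℝ → ℂ} (hw : Integrable w) (x : ℝ) :
    Integrable (fun τ : ℝ => w τ * Complex.exp (Complex.I * x * τ)) := by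
  have : Integrable (fun τ : ℝ => Complex.exp (Complex.I * x * τ) * w τ) :=
    hw.bdd_mul (cont_exp x).aestronglyMeasurable (Filter.Eventually.of_forall fun τ => le_of_eq (norm_exp_I_mul x τ))
  simpa [mul_comm] using this

lemma conv_apply (w1 w2 : ℝ → ℂ) (τ : ℝ) :
    (w1 ⋆[ContinuousLinearMap.mul ℝ ℂ] w2) τ = ∫ a : ℝ, w1 a * w2 (τ - a) := by
  simp [convolution_def]

lemma conv_apply_r (w1 w2 : ℝ → ℝ) (τ : ℝ) :
    (w1 ⋆[ContinuousLinearMap.mul ℝ ℝ] w2) τ = ∫ a : ℝ, w1 a * w2 (τ - a) := by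
  simp [convolution_def]

-- differentiability of iterated derivatives of smooth functions
lemma diff_iter {f : ℝ → ℂ} (hf : ∀ k : ℕ, ContDiff ℝ k f) (m : ℕ) :
    Differentiable ℝ (iteratedDeriv m f) :=
  (hf (m + 1)).differentiable_iteratedDeriv m (by exact_mod_cast Nat.lt_succ_self m)

-- Pascal recombination
lemma pascal_sum (n : ℕ) (a : ℕ → ℕ → ℂ) :
    ∑ k ∈ Finset.range (n + 1), (n.choose k : ℂ) * (a (k+1) (n-k) + a k (n-k+1)) =
    ∑ k ∈ Finset.range (n + 2), ((n+1).choose k : ℂ) * a k (n+1-k) := by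
  have hsplit : ∑ k ∈ Finset.range (n + 1), (n.choose k : ℂ) * (a (k+1) (n-k) + a k (n-k+1)) =
      (∑ k ∈ Finset.range (n + 1), (n.choose k : ℂ) * a (k+1) (n-k)) +
      ∑ k ∈ Finset.range (n + 1), (n.choose k : ℂ) * a k (n-k+1) := by
    rw [← Finset.sum_add_distrib]; congr 1; ext k; ring
  rw [hsplit]
  rw [Finset.sum_range_succ' (fun k => ((n+1).choose k : ℂ) * a k (n+1-k)) (n+1)]
  have h1 : ∀ k ∈ Finset.range (n+1),
      (((n+1).choose (k+1) : ℂ)) * a (k+1) (n+1-(k+1)) =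
      (n.choose k : ℂ) * a (k+1) (n-k) + (n.choose (k+1) : ℂ) * a (k+1) (n-k) := by
    intro k _
    push_cast [Nat.choose_succ_succ, Nat.succ_sub_succ]
    ring
  rw [Finset.sum_congr rfl h1, Finset.sum_add_distrib]
  have h2 : ∑ k ∈ Finset.range (n + 1), (n.choose k : ℂ) * a k (n-k+1) =
      (∑ k ∈ Finset.range (n + 1), (n.choose (k+1) : ℂ) * a (k+1) (n-k)) +
      ((n+1).choose 0 : ℂ) * a 0 (n+1) := by
    rw [Finset.sum_range_succ (fun k => (n.choose (k+1) : ℂ) * a (k+1) (n-k)) n]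
    rw [Nat.choose_succ_self]
    have h3 : ∑ k ∈ Finset.range (n + 1), (n.choose k : ℂ) * a k (n-k+1) =
        ∑ k ∈ Finset.range (n + 1), (n.choose k : ℂ) * a k (n+1-k) := by
      refine Finset.sum_congr rfl fun k hk => ?_
      rw [Finset.mem_range] at hk
      congr 2
      omega
    rw [h3, Finset.sum_range_succ' (fun k => (n.choose k : ℂ) * a k (n+1-k)) n]
    simp only [Nat.choose_zero_right, Nat.cast_one, Nat.cast_zero, Nat.succ_sub_succ]
    push_cast
    ring
  rw [h2]
  simp only [Nat.sub_zero]
  ring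

-- Leibniz rule for iteratedDeriv
lemma leibniz_iteratedDeriv {F G : ℝ → ℂ} (hF : ∀ k : ℕ, ContDiff ℝ k F)
    (hG : ∀ k : ℕ, ContDiff ℝ k G) (n : ℕ) (x : ℝ) :
    iteratedDeriv n (fun y => F y * G y) x =
      ∑ k ∈ Finset.range (n + 1),
        (n.choose k : ℂ) * (iteratedDeriv k F x * iteratedDeriv (n - k) G x) := by
  induction n generalizing x with
  | zero => simp
  | succ n ih =>
    rw [iteratedDeriv_succ]
    have hrw : iteratedDeriv n (fun y => F y * G y) = fun y =>
        ∑ k ∈ Finset.range (n + 1),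
          (n.choose k : ℂ) * (iteratedDeriv k F y * iteratedDeriv (n - k) G y) := funext ih
    rw [hrw]
    have hdiff : ∀ k ∈ Finset.range (n + 1), DifferentiableAt ℝ
        (fun y => (n.choose k : ℂ) * (iteratedDeriv k F y * iteratedDeriv (n - k) G y)) x :=
      fun k _ => (((diff_iter hF k x).mul (diff_iter hG (n - k) x)).const_mul _)
    rw [deriv_fun_sum hdiff]
    have hterm : ∀ k ∈ Finset.range (n + 1),
        deriv (fun y => (n.choose k : ℂ) * (iteratedDeriv k F y * iteratedDeriv (n - k) G y)) x =
        (n.choose k : ℂ) * (iteratedDeriv (k+1) F x * iteratedDeriv (n-k) G x +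
          iteratedDeriv k F x * iteratedDeriv (n-k+1) G x) := by
      intro k _
      rw [deriv_const_mul _ ((diff_iter hF k x).fun_mul (diff_iter hG (n - k) x)),
        deriv_fun_mul (diff_iter hF k x) (diff_iter hG (n - k) x),
        iteratedDeriv_succ, iteratedDeriv_succ]
    rw [Finset.sum_congr rfl hterm]
    exact pascal_sum n (fun i j => iteratedDeriv i F x * iteratedDeriv j G x)

-- Fourier representation of a product via convolution
lemma conv_fourier {w1 w2 : ℝ → ℂ} (h1 : Integrable w1) (h2 : Integrable w2) (x : ℝ) :
    (∫ τ : ℝ, w1 τ * Complex.exp (Complex.I * x * τ)) *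
      (∫ τ : ℝ, w2 τ * Complex.exp (Complex.I * x * τ)) =
    ∫ τ : ℝ, (w1 ⋆[mul ℝ ℂ] w2) τ * Complex.exp (Complex.I * x * τ) := by
  have hprod : Integrable (fun p : ℝ × ℝ =>
      w1 p.2 * w2 (p.1 - p.2) * Complex.exp (Complex.I * x * p.1)) (volume.prod volume) := by
    have hbase : Integrable (fun p : ℝ × ℝ => w1 p.2 * w2 (p.1 - p.2)) (volume.prod volume) := by
      simpa using h1.convolution_integrand (mul ℝ ℂ) h2
    have := hbase.bdd_mul
      (f := fun p : ℝ × ℝ => Complex.exp (Complex.I * x * p.1))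
      (((cont_exp x).comp continuous_fst).aestronglyMeasurable)
      (Filter.Eventually.of_forall fun p => le_of_eq (norm_exp_I_mul x p.1))
    simpa [mul_comm] using this
  have key : ∫ τ : ℝ, (w1 ⋆[mul ℝ ℂ] w2) τ * Complex.exp (Complex.I * x * τ) =
      ∫ a : ℝ, ∫ τ : ℝ, w1 a * w2 (τ - a) * Complex.exp (Complex.I * x * τ) := by
    rw [← integral_integral_swap hprod]
    refine integral_congr_ae (Filter.Eventually.of_forall fun τ => ?_)
    show (w1 ⋆[ContinuousLinearMap.mul ℝ ℂ] w2) τ * Complex.exp (Complex.I * x * τ) =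
      ∫ y : ℝ, w1 y * w2 (τ - y) * Complex.exp (Complex.I * x * τ)
    rw [conv_apply, ← integral_mul_const]
  rw [key]
  have inner : ∀ a : ℝ, (∫ τ : ℝ, w1 a * w2 (τ - a) * Complex.exp (Complex.I * x * τ)) =
      (w1 a * Complex.exp (Complex.I * x * a)) *
        ∫ τ : ℝ, w2 τ * Complex.exp (Complex.I * x * τ) := by
    intro a
    have hshift := integral_sub_right_eq_self (μ := volume)
      (fun u : ℝ => w1 a * w2 u * Complex.exp (Complex.I * x * (u + a))) a
    have heq : (∫ τ : ℝ, w1 a * w2 (τ - a) * Complex.exp (Complex.I * x * τ)) =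
        ∫ u : ℝ, w1 a * w2 u * Complex.exp (Complex.I * x * (u + a)) := by
      rw [← hshift]
      refine integral_congr_ae (Filter.Eventually.of_forall fun τ => ?_)
      have hca : ((τ - a : ℝ) : ℂ) + (a : ℂ) = (τ : ℂ) := by push_cast; ring
      simp only
      rw [hca]
    rw [heq]
    have hpt : ∀ u : ℝ, w1 a * w2 u * Complex.exp (Complex.I * x * (u + a)) =
        (w1 a * Complex.exp (Complex.I * x * a)) *
          (w2 u * Complex.exp (Complex.I * x * u)) := by
      intro u
      have : Complex.exp (Complex.I * x * (u + a)) =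
          Complex.exp (Complex.I * x * u) * Complex.exp (Complex.I * x * a) := by
        rw [← Complex.exp_add]; congr 1; ring
      rw [this]; ring
    simp_rw [hpt]
    exact integral_const_mul _ _
  simp_rw [inner]
  rw [integral_mul_const]

lemma conv_norm {w1 w2 : ℝ → ℂ} (h1 : Integrable w1) (h2 : Integrable w2) :
    (∫ τ : ℝ, ‖(w1 ⋆[mul ℝ ℂ] w2) τ‖) ≤ (∫ τ : ℝ, ‖w1 τ‖) * ∫ τ : ℝ, ‖w2 τ‖ := by
  have hn1 : Integrable (fun τ : ℝ => ‖w1 τ‖) := h1.norm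
  have hn2 : Integrable (fun τ : ℝ => ‖w2 τ‖) := h2.norm
  have hconvn : Integrable ((fun τ : ℝ => ‖w1 τ‖) ⋆[mul ℝ ℝ] (fun τ : ℝ => ‖w2 τ‖)) :=
    hn1.integrable_convolution (mul ℝ ℝ) hn2
  have hconv : Integrable (w1 ⋆[mul ℝ ℂ] w2) := h1.integrable_convolution (mul ℝ ℂ) h2
  have hpt : ∀ τ : ℝ, ‖(w1 ⋆[mul ℝ ℂ] w2) τ‖ ≤
      ((fun τ : ℝ => ‖w1 τ‖) ⋆[mul ℝ ℝ] (fun τ : ℝ => ‖w2 τ‖)) τ := by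
    intro τ
    rw [conv_apply, conv_apply_r]
    calc ‖∫ a : ℝ, w1 a * w2 (τ - a)‖ ≤ ∫ a : ℝ, ‖w1 a * w2 (τ - a)‖ :=
          norm_integral_le_integral_norm _
      _ = ∫ a : ℝ, ‖w1 a‖ * ‖w2 (τ - a)‖ := by simp [norm_mul]
  calc (∫ τ : ℝ, ‖(w1 ⋆[mul ℝ ℂ] w2) τ‖)
      ≤ ∫ τ : ℝ, ((fun τ : ℝ => ‖w1 τ‖) ⋆[mul ℝ ℝ] (fun τ : ℝ => ‖w2 τ‖)) τ :=
        integral_mono hconv.norm hconvn hpt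
    _ = (∫ τ : ℝ, ‖w1 τ‖) * ∫ τ : ℝ, ‖w2 τ‖ := by
        have := integral_convolution (mul ℝ ℝ) hn1 hn2
        simpa using this

/-- If `f ∈ 𝓔_s^1` and `g ∈ 𝓔_t^1` then `f·g ∈ 𝓔_{s+t}^1`.  Membership of a smooth
`f : ℝ → ℂ` in `𝓔_s^1` is expressed by: there is `C ≥ 1` such that for all `m = 0,…,s`
and all `n ∈ ℕ` the `n`-th derivative of `x ↦ f(x)(x−i)^m` has an integrable Fourier
witness `w` (i.e. it equals `x ↦ ∫ w(τ)e^{ixτ} dτ`) with `∫|w| ≤ C^{n+1}·n!`. -/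
theorem stmt6 (s t : ℕ) (f g : ℝ → ℂ)
    (hf : ∀ k : ℕ, ContDiff ℝ k f) (hg : ∀ k : ℕ, ContDiff ℝ k g)
    (Cf : ℝ) (hCf : 1 ≤ Cf)
    (hfE : ∀ m ≤ s, ∀ n : ℕ, ∃ w : ℝ → ℂ, Integrable w ∧
      (∀ x : ℝ, iteratedDeriv n (fun y : ℝ => f y * ((y : ℂ) - Complex.I) ^ m) x =
        ∫ τ : ℝ, w τ * Complex.exp (Complex.I * x * τ)) ∧
      (∫ τ : ℝ, ‖w τ‖) ≤ Cf ^ (n + 1) * n.factorial)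
    (Cg : ℝ) (hCg : 1 ≤ Cg)
    (hgE : ∀ m ≤ t, ∀ n : ℕ, ∃ w : ℝ → ℂ, Integrable w ∧
      (∀ x : ℝ, iteratedDeriv n (fun y : ℝ => g y * ((y : ℂ) - Complex.I) ^ m) x =
        ∫ τ : ℝ, w τ * Complex.exp (Complex.I * x * τ)) ∧
      (∫ τ : ℝ, ‖w τ‖) ≤ Cg ^ (n + 1) * n.factorial) :
    ∃ C : ℝ, 1 ≤ C ∧ ∀ m ≤ s + t, ∀ n : ℕ, ∃ w : ℝ → ℂ, Integrable w ∧
      (∀ x : ℝ, iteratedDeriv n (fun y : ℝ => f y * g y * ((y : ℂ) - Complex.I) ^ m) x =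
        ∫ τ : ℝ, w τ * Complex.exp (Complex.I * x * τ)) ∧
      (∫ τ : ℝ, ‖w τ‖) ≤ C ^ (n + 1) * n.factorial := by
  refine ⟨2 * Cf * Cg, by nlinarith, ?_⟩
  intro m hm n
  have hm1 : min m s ≤ s := min_le_right m s
  have hm2 : m - min m s ≤ t := by omega
  have hm12 : min m s + (m - min m s) = m := by omega
  have hpoly : ∀ j k : ℕ, ContDiff ℝ k (fun y : ℝ => ((y : ℂ) - Complex.I) ^ j) :=
    fun j k => (Complex.ofRealCLM.contDiff.sub contDiff_const).pow j
  have hFs : ∀ k : ℕ, ContDiff ℝ k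
      (fun y : ℝ => f y * ((y : ℂ) - Complex.I) ^ min m s) :=
    fun k => (hf k).mul (hpoly _ k)
  have hGs : ∀ k : ℕ, ContDiff ℝ k
      (fun y : ℝ => g y * ((y : ℂ) - Complex.I) ^ (m - min m s)) :=
    fun k => (hg k).mul (hpoly _ k)
  have hFG : (fun y : ℝ => f y * g y * ((y : ℂ) - Complex.I) ^ m) =
      fun y : ℝ => (f y * ((y : ℂ) - Complex.I) ^ min m s) *
        (g y * ((y : ℂ) - Complex.I) ^ (m - min m s)) := by
    funext y
    rw [show ((y : ℂ) - Complex.I) ^ m = ((y : ℂ) - Complex.I) ^ min m s *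
      ((y : ℂ) - Complex.I) ^ (m - min m s) by rw [← pow_add, hm12]]
    ring
  choose wf hwfi hwfr hwfb using hfE (min m s) hm1
  choose wg hwgi hwgr hwgb using hgE (m - min m s) hm2
  have hconv : ∀ k : ℕ,
      Integrable ((wf k) ⋆[ContinuousLinearMap.mul ℝ ℂ] (wg (n - k))) :=
    fun k => (hwfi k).integrable_convolution _ (hwgi (n - k))
  refine ⟨fun τ => ∑ k ∈ Finset.range (n + 1), (n.choose k : ℂ) *
      ((wf k) ⋆[ContinuousLinearMap.mul ℝ ℂ] (wg (n - k))) τ, ?_, ?_, ?_⟩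
  · exact integrable_finset_sum _ fun k _ => (hconv k).const_mul _
  · intro x
    rw [hFG, leibniz_iteratedDeriv hFs hGs n x]
    have hint : ∀ k ∈ Finset.range (n + 1), Integrable (fun τ : ℝ =>
        (n.choose k : ℂ) * ((wf k) ⋆[ContinuousLinearMap.mul ℝ ℂ] (wg (n - k))) τ *
          Complex.exp (Complex.I * x * τ)) :=
      fun k _ => integrable_mul_exp ((hconv k).const_mul _) x
    have hswap : (∫ τ : ℝ, (∑ k ∈ Finset.range (n + 1), (n.choose k : ℂ) *
          ((wf k) ⋆[ContinuousLinearMap.mul ℝ ℂ] (wg (n - k))) τ) *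
            Complex.exp (Complex.I * x * τ)) =
        ∑ k ∈ Finset.range (n + 1), ∫ τ : ℝ, (n.choose k : ℂ) *
          ((wf k) ⋆[ContinuousLinearMap.mul ℝ ℂ] (wg (n - k))) τ *
            Complex.exp (Complex.I * x * τ) := by
      rw [← integral_finset_sum _ hint]
      refine integral_congr_ae (Filter.Eventually.of_forall fun τ => ?_)
      simp only [Finset.sum_mul]
    rw [hswap]
    refine Finset.sum_congr rfl fun k _ => ?_
    rw [hwfr k x, hwgr (n - k) x, conv_fourier (hwfi k) (hwgi (n - k)) x]
    simp_rw [mul_assoc]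
    rw [integral_const_mul]
  · have hA : ∀ k : ℕ, (0 : ℝ) ≤ ∫ τ : ℝ, ‖wf k τ‖ :=
      fun k => integral_nonneg fun τ => norm_nonneg _
    have hB : ∀ k : ℕ, (0 : ℝ) ≤ ∫ τ : ℝ, ‖wg k τ‖ :=
      fun k => integral_nonneg fun τ => norm_nonneg _
    have step1 : (∫ τ : ℝ, ‖∑ k ∈ Finset.range (n + 1), (n.choose k : ℂ) *
          ((wf k) ⋆[ContinuousLinearMap.mul ℝ ℂ] (wg (n - k))) τ‖) ≤
        ∑ k ∈ Finset.range (n + 1), (n.choose k : ℝ) *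
          ((Cf ^ (k + 1) * k.factorial) * (Cg ^ (n - k + 1) * (n - k).factorial)) := by
      have hmono : (∫ τ : ℝ, ‖∑ k ∈ Finset.range (n + 1), (n.choose k : ℂ) *
            ((wf k) ⋆[ContinuousLinearMap.mul ℝ ℂ] (wg (n - k))) τ‖) ≤
          ∫ τ : ℝ, ∑ k ∈ Finset.range (n + 1), (n.choose k : ℝ) *
            ‖((wf k) ⋆[ContinuousLinearMap.mul ℝ ℂ] (wg (n - k))) τ‖ := by
        refine integral_mono (integrable_finset_sum _
            fun k _ => (hconv k).const_mul _).norm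
          (integrable_finset_sum _ fun k _ => ((hconv k).norm.const_mul _)) fun τ => ?_
        refine le_trans (norm_sum_le _ _) (le_of_eq (Finset.sum_congr rfl fun k _ => ?_))
        rw [norm_mul, Complex.norm_natCast]
      refine hmono.trans ?_
      rw [integral_finset_sum _ fun k _ => ((hconv k).norm.const_mul _)]
      refine Finset.sum_le_sum fun k _ => ?_
      rw [integral_const_mul]
      refine mul_le_mul_of_nonneg_left ?_ (Nat.cast_nonneg _)
      refine (conv_norm (hwfi k) (hwgi (n - k))).trans ?_
      exact mul_le_mul (hwfb k) (hwgb (n - k)) (hB _) (by positivity)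
    refine step1.trans ?_
    have step2 : ∀ k ∈ Finset.range (n + 1), (n.choose k : ℝ) *
        ((Cf ^ (k + 1) * k.factorial) * (Cg ^ (n - k + 1) * (n - k).factorial)) ≤
        Cf ^ (n + 1) * Cg ^ (n + 1) * n.factorial := by
      intro k hk
      rw [Finset.mem_range, Nat.lt_succ_iff] at hk
      have e3 : (n.choose k : ℝ) * k.factorial * (n - k).factorial = n.factorial := by
        rw_mod_cast [Nat.choose_mul_factorial_mul_factorial hk]
      have e1 : Cf ^ (k + 1) ≤ Cf ^ (n + 1) := by
        apply pow_le_pow_right₀ hCf; omega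
      have e2 : Cg ^ (n - k + 1) ≤ Cg ^ (n + 1) := by
        apply pow_le_pow_right₀ hCg; omega
      calc (n.choose k : ℝ) *
          ((Cf ^ (k + 1) * k.factorial) * (Cg ^ (n - k + 1) * (n - k).factorial))
          = ((n.choose k : ℝ) * k.factorial * (n - k).factorial) *
            (Cf ^ (k + 1) * Cg ^ (n - k + 1)) := by ring
        _ = (Cf ^ (k + 1) * Cg ^ (n - k + 1)) * n.factorial := by rw [e3]; ring
        _ ≤ (Cf ^ (n + 1) * Cg ^ (n + 1)) * n.factorial := by
            refine mul_le_mul_of_nonneg_right ?_ (Nat.cast_nonneg _)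
            exact mul_le_mul e1 e2 (by positivity) (by positivity)
    refine (Finset.sum_le_sum step2).trans ?_
    rw [Finset.sum_const, Finset.card_range, nsmul_eq_mul]
    have hcard : ((n + 1 : ℕ) : ℝ) ≤ 2 ^ (n + 1) := by
      have := Nat.lt_two_pow_self (n := n)
      calc ((n + 1 : ℕ) : ℝ) ≤ (2 ^ n : ℕ) := by exact_mod_cast this
        _ ≤ (2 : ℝ) ^ (n + 1) := by
          rw [pow_succ]
          push_cast
          nlinarith [pow_pos (by norm_num : (0:ℝ) < 2) n]
    calc ((n + 1 : ℕ) : ℝ) * (Cf ^ (n + 1) * Cg ^ (n + 1) * n.factorial)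
        ≤ 2 ^ (n + 1) * (Cf ^ (n + 1) * Cg ^ (n + 1) * n.factorial) := by
          refine mul_le_mul_of_nonneg_right hcard (by positivity)
      _ = (2 * Cf * Cg) ^ (n + 1) * n.factorial := by
          rw [mul_pow, mul_pow]; ring
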